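/- Let p be a prime. (i) Every additive map g : ℚ_p → ℚ_p whose range is norm-bounded (there exists C such that ‖g x‖ ≤ C for all x ∈ ℚ_p) is identically zero. (ii) Every additive map h : ℚ_p → ℚ_p that vanishes on some ball around 0 (there exists ε > 0 with h x = 0 whenever ‖x‖ ≤ ε) is identically zero. Consequently there exist no additive maps g, h : ℚ_p → ℚ_p with g + h = id such that g has norm-bounded range and h vanishes on a ball around 0. -/

import Mathlib

theorem padic_aux_bounded (p : ℕ) [Fact p.Prime] :
    ∀ g : ℚ_[p] →+ ℚ_[p], (∃ C : ℝ, ∀ x : ℚ_[p], ‖g x‖ ≤ C) → g = 0 := by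
  rintro g ⟨C, hC⟩
  have hp : (1 : ℝ) < (p : ℝ) := by exact_mod_cast (Fact.out : p.Prime).one_lt
  have hpQ : ((p : ℚ_[p]) : ℚ_[p]) ≠ 0 := by
    exact_mod_cast Nat.cast_ne_zero.mpr (Fact.out : p.Prime).ne_zero
  ext x
  simp only [AddMonoidHom.zero_apply]
  by_contra hx
  have hgx : 0 < ‖g x‖ := norm_pos_iff.mpr hx
  obtain ⟨n, hn⟩ := pow_unbounded_of_one_lt (C / ‖g x‖) hp
  have hC' : C < (p : ℝ) ^ n * ‖g x‖ := by
    have := (div_lt_iff₀ hgx).mp hn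
    linarith
  set y : ℚ_[p] := ((p : ℚ_[p]) ^ n)⁻¹ * x with hy
  have hxy : (p ^ n : ℕ) • y = x := by
    rw [nsmul_eq_mul, hy]
    push_cast
    field_simp
  have hgxy : g x = (p : ℚ_[p]) ^ n * g y := by
    rw [← hxy, map_nsmul, nsmul_eq_mul]
    push_cast
    ring
  have hnorm : ‖g x‖ = ((p : ℝ))⁻¹ ^ n * ‖g y‖ := by
    rw [hgxy, norm_mul, norm_pow, Padic.norm_p]
  have hgy : ‖g y‖ = (p : ℝ) ^ n * ‖g x‖ := by
    rw [hnorm]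
    rw [← mul_assoc, ← mul_pow, mul_inv_cancel₀ (ne_of_gt (by linarith)), one_pow, one_mul]
  exact absurd (hC y) (by rw [hgy]; exact not_le.mpr hC')

theorem padic_aux_discrete (p : ℕ) [Fact p.Prime] :
    ∀ h : ℚ_[p] →+ ℚ_[p], (∃ ε : ℝ, 0 < ε ∧ ∀ x : ℚ_[p], ‖x‖ ≤ ε → h x = 0) → h = 0 := by
  rintro h ⟨ε, hε, hball⟩
  have hp : (1 : ℝ) < (p : ℝ) := by exact_mod_cast (Fact.out : p.Prime).one_lt
  have hpQ : (p : ℚ_[p]) ≠ 0 := by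
    exact_mod_cast Nat.cast_ne_zero.mpr (Fact.out : p.Prime).ne_zero
  ext x
  simp only [AddMonoidHom.zero_apply]
  obtain ⟨n, hn⟩ := pow_unbounded_of_one_lt (‖x‖ / ε) hp
  have hxε : ‖x‖ < (p : ℝ) ^ n * ε := by
    have := (div_lt_iff₀ hε).mp hn
    linarith
  have hsmall : ‖(p ^ n : ℕ) • x‖ ≤ ε := by
    rw [nsmul_eq_mul]
    push_cast
    rw [norm_mul, norm_pow, Padic.norm_p]
    have hpn : (0 : ℝ) < (p : ℝ) ^ n := by positivity
    rw [inv_pow, inv_mul_le_iff₀ hpn]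
    have : (p : ℝ) ^ n * ε = ε * (p : ℝ) ^ n := mul_comm _ _
    linarith
  have h0 : h ((p ^ n : ℕ) • x) = 0 := hball _ hsmall
  rw [map_nsmul, nsmul_eq_mul] at h0
  have : ((p : ℚ_[p]) ^ n) * h x = 0 := by push_cast at h0 ⊢; linear_combination h0
  rcases mul_eq_zero.mp this with h1 | h1
  · exact absurd h1 (pow_ne_zero n hpQ)
  · exact h1

/-- For the field `ℚ_p` of `p`-adic numbers:
(i) every additive map `g : ℚ_p → ℚ_p` with norm-bounded range is zero;
(ii) every additive map `h : ℚ_p → ℚ_p` vanishing on some ball around `0` is zero;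
consequently there is no decomposition `id = g + h` with `g` of norm-bounded range
and `h` vanishing on a ball around `0`. -/
theorem padic_no_bounded_discrete_decomposition (p : ℕ) [Fact p.Prime] :
    (∀ g : ℚ_[p] →+ ℚ_[p], (∃ C : ℝ, ∀ x : ℚ_[p], ‖g x‖ ≤ C) → g = 0) ∧
    (∀ h : ℚ_[p] →+ ℚ_[p], (∃ ε : ℝ, 0 < ε ∧ ∀ x : ℚ_[p], ‖x‖ ≤ ε → h x = 0) → h = 0) ∧
    ¬ ∃ (g h : ℚ_[p] →+ ℚ_[p]),
        (∃ C : ℝ, ∀ x : ℚ_[p], ‖g x‖ ≤ C) ∧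
        (∃ ε : ℝ, 0 < ε ∧ ∀ x : ℚ_[p], ‖x‖ ≤ ε → h x = 0) ∧
        (∀ x : ℚ_[p], g x + h x = x) := by
  refine ⟨padic_aux_bounded p, padic_aux_discrete p, ?_⟩
  rintro ⟨g, h, hg, hh, hsum⟩
  have hg0 := padic_aux_bounded p g hg
  have hh0 := padic_aux_discrete p h hh
  have := hsum 1
  rw [hg0, hh0] at this
  simp at this
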